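/- Let A be a finite poset and let a ∈ A be a colinear point with witness a↓. Let r_{a↓} : A → A∖{a} be the map sending every b ≠ a to itself and a to a↓, and let i : A∖{a} → A be the inclusion. Then r_{a↓} is order-preserving, r_{a↓} ∘ i = id, and i ∘ r_{a↓} is homotopic to the identity of X_A; that is, A∖{a} is a deformation retract of A. -/
import Mathlib

open Topology

lemma homotopic_of_le_id {α : Type*} [Preorder α]
    (f : C(WithLowerSet α, WithLowerSet α)) (hf : ∀ x, f x ≤ x) :
    ContinuousMap.Homotopic f (ContinuousMap.id (WithLowerSet α)) := by
  refine ⟨⟨⟨fun p => if p.1 = 1 then p.2 else f p.2, ?_⟩, ?_, ?_⟩⟩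
  · rw [continuous_def]
    intro U hU
    have hUl : IsLowerSet U := Topology.IsLowerSet.isOpen_iff_isLowerSet.mp hU
    have hfc : IsOpen (f ⁻¹' U) := hU.preimage f.continuous
    have : (fun p : unitInterval × WithLowerSet α =>
        if p.1 = 1 then p.2 else f p.2) ⁻¹' U =
        (Set.univ ×ˢ U) ∪ (({(1 : unitInterval)}ᶜ) ×ˢ (f ⁻¹' U)) := by
      ext ⟨t, x⟩
      simp only [Set.mem_preimage, Set.mem_union, Set.mem_prod, Set.mem_univ, true_and,
        Set.mem_compl_iff, Set.mem_singleton_iff]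
      have hux : x ∈ U → f x ∈ U := fun hx => hUl (hf x) hx
      by_cases ht : t = 1 <;> simp [ht] <;> tauto
    rw [this]
    exact (isOpen_univ.prod hU).union (isOpen_compl_singleton.prod hfc)
  · intro x
    simp only [ContinuousMap.coe_mk]
    rw [if_neg (by norm_num : (0 : unitInterval) ≠ 1)]
  · intro x
    simp

-- Let `A` be a finite poset and `a ∈ A` a colinear point with witness `aDn` (`aDn < a` and every
-- `b < a` satisfies `b ≤ aDn`).  Let `r : A → A∖{a}` send every `b ≠ a` to itself and `a` to
-- `aDn`, and let `i : A∖{a} → A` be the inclusion (`Subtype.val`).  Then `r` is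
-- order-preserving, `r ∘ i = id`, and `i ∘ r` (as a continuous self-map of
-- `X_A = Topology.WithLowerSet A`) is homotopic to the identity of `X_A`: `A∖{a}` is a
-- deformation retract of `A`.
theorem stmt4 {A : Type*} [PartialOrder A] [Fintype A] (a aDn : A)
    (h1 : aDn < a) (h2 : ∀ b : A, b < a → b ≤ aDn)
    (r : A → {b : A // b ≠ a})
    (hrne : ∀ (b : A) (hb : b ≠ a), r b = ⟨b, hb⟩)
    (hra : r a = ⟨aDn, h1.ne⟩) :
    ∃ hmono : Monotone r,
      (∀ b : {b : A // b ≠ a}, r (b : A) = b) ∧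
        ContinuousMap.Homotopic
          (WithLowerSet.map ⟨fun b : A => ((r b : A)), fun _ _ h => hmono h⟩)
          (ContinuousMap.id (WithLowerSet A)) := by
  have key : ∀ b : A, (r b : A) ≤ b := by
    intro b
    by_cases hb : b = a
    · subst hb; rw [hra]; exact h1.le
    · rw [hrne b hb]
  have hmono : Monotone r := by
    intro b c hbc
    rw [← Subtype.coe_le_coe]
    by_cases hb : b = a
    · by_cases hc : c = a
      · rw [hb, hc]
      · rw [hb, hra, hrne c hc]
        exact le_trans h1.le (hb ▸ hbc)
    · by_cases hc : c = a
      · rw [hrne b hb, hc, hra]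
        exact h2 b (lt_of_le_of_ne (hc ▸ hbc) hb)
      · rw [hrne b hb, hrne c hc]
        exact hbc
  refine ⟨hmono, fun b => by rw [hrne b.1 b.2], ?_⟩
  exact homotopic_of_le_id _ (fun x => key x)
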